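/- Gilbert–Varshamov bound in the rank metric: there exists a code C ⊆ F_{q^m}^n of minimum rank distance at least d with |C| ≥ q^{mn} / |B_{d−1}|, where |B_{d−1}| is the size of a ball of rank radius d−1. -/

import Mathlib

/-- The `F_q`-rank of a vector `a ∈ F_{q^m}^n` with respect to a fixed basis `β`. -/
noncomputable def rankq (Fq F : Type*) [Field Fq] [Field F] [Algebra Fq F]
    {m n : ℕ} (β : Module.Basis (Fin m) Fq F) (a : Fin n → F) : ℕ :=
  (Matrix.of fun (i : Fin m) (j : Fin n) => β.repr (a j) i).rank

lemma rankq_neg (Fq F : Type*) [Field Fq] [Field F] [Algebra Fq F]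
    {m n : ℕ} (β : Module.Basis (Fin m) Fq F) (a : Fin n → F) :
    rankq Fq F β (-a) = rankq Fq F β a := by
  unfold rankq
  have h : (Matrix.of fun (i : Fin m) (j : Fin n) => β.repr ((-a) j) i)
      = -(Matrix.of fun (i : Fin m) (j : Fin n) => β.repr (a j) i) := by
    ext i j; simp
  rw [h]
  unfold Matrix.rank
  rw [show (-(Matrix.of fun (i : Fin m) (j : Fin n) => β.repr (a j) i)).mulVecLin
      = -(Matrix.of fun (i : Fin m) (j : Fin n) => β.repr (a j) i).mulVecLin by
    ext v; simp [Matrix.neg_mulVec], LinearMap.range_neg]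

theorem gilbert_varshamov_bound_rank_metric (Fq F : Type*) [Field Fq] [Fintype Fq]
    [Field F] [Fintype F] [Algebra Fq F]
    (m n d : ℕ) (hd : 1 ≤ d) (β : Module.Basis (Fin m) Fq F) :
    ∃ C : Set (Fin n → F),
      (∀ a ∈ C, ∀ b ∈ C, a ≠ b → d ≤ rankq Fq F β (a - b)) ∧
      ((Fintype.card Fq : ℝ) ^ (m * n)) /
          (Nat.card {b : Fin n → F // rankq Fq F β b ≤ d - 1} : ℝ) ≤ (Nat.card C : ℝ) := by
  classical
  set P : Finset (Fin n → F) → Prop :=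
    fun C => ∀ a ∈ C, ∀ b ∈ C, a ≠ b → d ≤ rankq Fq F β (a - b) with hP
  set S : Finset (Finset (Fin n → F)) := Finset.univ.filter P with hS
  have hSne : S.Nonempty := ⟨∅, by simp [hS, hP]⟩
  obtain ⟨C, hCS, hmax⟩ := S.exists_max_image Finset.card hSne
  have hC : P C := (Finset.mem_filter.mp hCS).2
  -- covering property
  have hcover : ∀ x : Fin n → F, ∃ c ∈ C, rankq Fq F β (x - c) ≤ d - 1 := by
    intro x
    by_contra hcon
    push_neg at hcon
    have hfar : ∀ c ∈ C, d ≤ rankq Fq F β (x - c) := by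
      intro c hc
      have := hcon c hc
      omega
    have hxC : x ∉ C := by
      intro hx
      have := hfar x hx
      have h0 : rankq Fq F β (x - x) = 0 := by
        have hz : (Matrix.of fun (i : Fin m) (j : Fin n) => β.repr ((x - x) j) i) = 0 := by
          ext i j; simp
        unfold rankq
        rw [hz, Matrix.rank_zero]
      omega
    have hins : P (insert x C) := by
      intro a ha b hb hab
      rcases Finset.mem_insert.mp ha with ha' | ha' <;>
        rcases Finset.mem_insert.mp hb with hb' | hb'
      · exact absurd (ha'.trans hb'.symm) hab
      · subst ha'; exact hfar b hb'
      · subst hb'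
        have := hfar a ha'
        have := rankq_neg Fq F β (b - a)
        rw [neg_sub] at this
        omega
      · exact hC a ha' b hb' hab
    have : insert x C ∈ S := Finset.mem_filter.mpr ⟨Finset.mem_univ _, hins⟩
    have hle := hmax _ this
    rw [Finset.card_insert_of_notMem hxC] at hle
    omega
  -- counting
  have hball : ∀ c : Fin n → F,
      (Finset.univ.filter (fun x => rankq Fq F β (x - c) ≤ d - 1)).card
        = Nat.card {b : Fin n → F // rankq Fq F β b ≤ d - 1} := by
    intro c
    rw [Nat.card_eq_fintype_card, Fintype.card_subtype]
    apply Finset.card_bij (fun x _ => x - c)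
    · intro x hx; simpa using (Finset.mem_filter.mp hx).2
    · intro x hx y hy hxy; exact sub_left_injective hxy
    · intro b hb
      refine ⟨b + c, ?_, by simp⟩
      simp only [Finset.mem_filter, Finset.mem_univ, true_and, add_sub_cancel_right]
      simpa using (Finset.mem_filter.mp hb).2
  have hcount : Fintype.card (Fin n → F)
      ≤ C.card * Nat.card {b : Fin n → F // rankq Fq F β b ≤ d - 1} := by
    have hsub : (Finset.univ : Finset (Fin n → F)) ⊆
        C.biUnion (fun c => Finset.univ.filter (fun x => rankq Fq F β (x - c) ≤ d - 1)) := by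
      intro x _
      obtain ⟨c, hc, hxc⟩ := hcover x
      exact Finset.mem_biUnion.mpr ⟨c, hc, by simp [hxc]⟩
    calc Fintype.card (Fin n → F) = (Finset.univ : Finset (Fin n → F)).card :=
          (Finset.card_univ).symm
      _ ≤ _ := Finset.card_le_card hsub
      _ ≤ ∑ c ∈ C, (Finset.univ.filter (fun x => rankq Fq F β (x - c) ≤ d - 1)).card :=
          Finset.card_biUnion_le
      _ = C.card * Nat.card {b : Fin n → F // rankq Fq F β b ≤ d - 1} := by
          rw [Finset.sum_congr rfl (fun c _ => hball c), Finset.sum_const, smul_eq_mul]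
  have hcardF : Fintype.card (Fin n → F) = Fintype.card Fq ^ (m * n) := by
    rw [Fintype.card_fun, Module.card_fintype β, Fintype.card_fin, Fintype.card_fin, ← pow_mul]
  refine ⟨(C : Set (Fin n → F)), ?_, ?_⟩
  · intro a ha b hb hab; exact hC a ha b hb hab
  · have hBpos : 0 < Nat.card {b : Fin n → F // rankq Fq F β b ≤ d - 1} := by
      rw [Nat.card_eq_fintype_card, Fintype.card_pos_iff]
      refine ⟨⟨0, ?_⟩⟩
      have h0 : rankq Fq F β (0 : Fin n → F) = 0 := by
        have hz : (Matrix.of fun (i : Fin m) (j : Fin n) => β.repr ((0 : Fin n → F) j) i) = 0 := by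
          ext i j; simp
        unfold rankq
        rw [hz, Matrix.rank_zero]
      omega
    rw [div_le_iff₀ (by exact_mod_cast hBpos)]
    rw [Nat.card_coe_set_eq, Set.ncard_coe_finset]
    have : (Fintype.card Fq : ℝ) ^ (m * n)
        ≤ (C.card : ℝ) * (Nat.card {b : Fin n → F // rankq Fq F β b ≤ d - 1} : ℝ) := by
      exact_mod_cast hcardF ▸ hcount
    exact this
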